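/- Let (X,d) be a compact metric space, let {S_1,...,S_N} be an iterated function system of contracting self-maps on X, let C ⊆ X be a nonempty compact set, let F_∅ be the unique nonempty compact set with F_∅ = ⋃_{i=1}^N S_i(F_∅), let F_C be the unique nonempty compact set with F_C = ⋃_{i=1}^N S_i(F_C) ∪ C, and let 𝒪 = C ∪ ⋃_{k≥1} ⋃_{i_1,...,i_k ∈ {1,...,N}} (S_{i_1} ∘ ⋯ ∘ S_{i_k})(C) be the orbital set. Then F_C = F_∅ ∪ 𝒪 and F_C equals the closure of 𝒪. -/

import Mathlib

open Set Filter Topology Metric MeasureTheory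

/-- Composition `S_{i_1} ∘ ⋯ ∘ S_{i_k}` of the maps of an IFS along a finite word. -/
def compList {X : Type*} {N : ℕ} (S : Fin N → X → X) : List (Fin N) → X → X
  | [] => id
  | i :: w => S i ∘ compList S w

theorem inhomogeneous_attractor_eq_union_orbital
    {X : Type*} [MetricSpace X] [CompactSpace X] {N : ℕ} (hN : 0 < N)
    (S : Fin N → X → X)
    (hS : ∀ i, ∃ c : NNReal, c < 1 ∧ LipschitzWith c (S i))
    (C : Set X) (hC : IsCompact C) (hCne : C.Nonempty)
    (F0 : Set X) (hF0c : IsCompact F0) (hF0ne : F0.Nonempty)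
    (hF0 : F0 = ⋃ i, S i '' F0)
    (FC : Set X) (hFCc : IsCompact FC) (hFCne : FC.Nonempty)
    (hFC : FC = (⋃ i, S i '' FC) ∪ C)
    (O : Set X)
    (hO : O = C ∪ ⋃ w ∈ {w : List (Fin N) | w ≠ []}, compList S w '' C) :
    FC = F0 ∪ O ∧ FC = closure O := by
  obtain ⟨c0, hc0⟩ := hCne
  set c : Fin N → NNReal := fun i => (hS i).choose with hc
  have hci : ∀ i, c i < 1 ∧ LipschitzWith (c i) (S i) := fun i => (hS i).choose_spec
  set K : NNReal := Finset.univ.sup c with hK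
  have hK1 : K < 1 := by
    rw [hK]
    refine (Finset.sup_lt_iff (by norm_num)).mpr ?_
    intro i _; exact (hci i).1
  have hK1R : (K : ℝ) < 1 := by exact_mod_cast hK1
  have hKlip : ∀ i, LipschitzWith K (S i) := fun i =>
    ((hci i).2).weaken (Finset.le_sup (Finset.mem_univ i))
  set D : ℝ := Metric.diam (Set.univ : Set X) with hDdef
  have hD : ∀ x y : X, dist x y ≤ D := fun x y =>
    Metric.dist_le_diam_of_mem isCompact_univ.isBounded (mem_univ x) (mem_univ y)
  -- distance contraction along words
  have hdist : ∀ w : List (Fin N), ∀ x y : X,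
      dist (compList S w x) (compList S w y) ≤ (K : ℝ) ^ w.length * dist x y := by
    intro w
    induction w with
    | nil => intro x y; simp [compList]
    | cons i w ih =>
      intro x y
      simp only [compList, Function.comp_apply, List.length_cons]
      calc dist (S i (compList S w x)) (S i (compList S w y))
          ≤ (K : ℝ) * dist (compList S w x) (compList S w y) := (hKlip i).dist_le_mul _ _
        _ ≤ (K : ℝ) * ((K : ℝ) ^ w.length * dist x y) :=
            mul_le_mul_of_nonneg_left (ih x y) K.coe_nonneg
        _ = (K : ℝ) ^ (w.length + 1) * dist x y := by ring
  have happ : ∀ w w' : List (Fin N), ∀ x : X,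
      compList S (w ++ w') x = compList S w (compList S w' x) := by
    intro w w' x
    induction w with
    | nil => simp [compList]
    | cons i w ih => simp [compList, ih]
  -- basic inclusions for O
  have hCO : C ⊆ O := by rw [hO]; exact subset_union_left
  have hwO : ∀ w : List (Fin N), w ≠ [] → compList S w '' C ⊆ O := by
    intro w hw
    rw [hO]
    exact subset_union_of_subset_right (subset_biUnion_of_mem (u := fun w => compList S w '' C) hw) _
  -- FC invariance
  have hSFC : ∀ i, S i '' FC ⊆ FC := fun i => by
    nth_rewrite 2 [hFC]
    exact subset_union_of_subset_left (subset_iUnion (fun j => S j '' FC) i) _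
  have hCFC : C ⊆ FC := by
    rw [hFC]
    exact subset_union_right
  have hwFC : ∀ w : List (Fin N), compList S w '' C ⊆ FC := by
    intro w
    induction w with
    | nil => simpa [compList] using hCFC
    | cons i w ih =>
      have : compList S (i :: w) '' C = S i '' (compList S w '' C) := by
        simp only [compList, Function.comp_apply]; exact (Set.image_image _ _ _).symm
      rw [this]
      exact (image_mono (f := S i) ih).trans (hSFC i)
  have hOFC : O ⊆ FC := by
    rw [hO]
    exact union_subset hCFC (iUnion₂_subset fun w _ => hwFC w)
  -- F0 invariance
  have hSF0 : ∀ i, S i '' F0 ⊆ F0 := fun i => by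
    nth_rewrite 2 [hF0]
    exact subset_iUnion (fun j => S j '' F0) i
  have hwF0 : ∀ w : List (Fin N), compList S w '' F0 ⊆ F0 := by
    intro w
    induction w with
    | nil => simp [compList]
    | cons i w ih =>
      have : compList S (i :: w) '' F0 = S i '' (compList S w '' F0) := by
        simp only [compList, Function.comp_apply]; exact (Set.image_image _ _ _).symm
      rw [this]
      exact (image_mono (f := S i) ih).trans (hSF0 i)
  -- tendsto fact
  have htend : Tendsto (fun n : ℕ => (K : ℝ) ^ n * D) atTop (𝓝 0) := by
    have h := tendsto_pow_atTop_nhds_zero_of_lt_one K.coe_nonneg hK1R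
    simpa using h.mul_const D
  -- decomposition of elements of FC
  have hdecomp : ∀ n : ℕ, ∀ x ∈ FC, x ∈ O ∨
      ∃ w : List (Fin N), ∃ y ∈ FC, w.length = n ∧ x = compList S w y := by
    intro n
    induction n with
    | zero => intro x hx; exact Or.inr ⟨[], x, hx, rfl, rfl⟩
    | succ n ih =>
      intro x hx
      rcases ih x hx with h | ⟨w, y, hy, hlen, hxeq⟩
      · exact Or.inl h
      · rw [hFC] at hy
        rcases hy with hy | hy
        · simp only [mem_iUnion, mem_image] at hy
          obtain ⟨i, z, hz, hzy⟩ := hy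
          refine Or.inr ⟨w ++ [i], z, hz, ?_, ?_⟩
          · simp [hlen]
          · rw [happ]; simp [compList, hzy, hxeq]
        · left
          rcases eq_or_ne w [] with rfl | hw
          · have : x = y := by simpa [compList] using hxeq
            exact hCO (this ▸ hy)
          · exact hwO w hw ⟨y, hy, hxeq.symm⟩
  -- decomposition of elements of F0
  have hdecomp0 : ∀ n : ℕ, ∀ x ∈ F0,
      ∃ w : List (Fin N), ∃ y ∈ F0, w.length = n ∧ x = compList S w y := by
    intro n
    induction n with
    | zero => intro x hx; exact ⟨[], x, hx, rfl, rfl⟩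
    | succ n ih =>
      intro x hx
      obtain ⟨w, y, hy, hlen, hxeq⟩ := ih x hx
      rw [hF0] at hy
      simp only [mem_iUnion, mem_image] at hy
      obtain ⟨i, z, hz, hzy⟩ := hy
      refine ⟨w ++ [i], z, hz, ?_, ?_⟩
      · simp [hlen]
      · rw [happ]; simp [compList, hzy, hxeq]
  -- FC ⊆ F0 ∪ O
  have hFCsub : FC ⊆ F0 ∪ O := by
    intro x hx
    by_cases hxO : x ∈ O
    · exact Or.inr hxO
    left
    obtain ⟨z0, hz0⟩ := hF0ne
    have key : ∀ n : ℕ, Metric.infDist x F0 ≤ (K : ℝ) ^ n * D := by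
      intro n
      rcases hdecomp n x hx with h | ⟨w, y, hy, hlen, hxeq⟩
      · exact absurd h hxO
      · have hmem : compList S w z0 ∈ F0 := hwF0 w ⟨z0, hz0, rfl⟩
        calc Metric.infDist x F0 ≤ dist x (compList S w z0) :=
              Metric.infDist_le_dist_of_mem hmem
          _ = dist (compList S w y) (compList S w z0) := by rw [hxeq]
          _ ≤ (K : ℝ) ^ w.length * dist y z0 := hdist w y z0
          _ ≤ (K : ℝ) ^ n * D := by
              rw [hlen]; exact mul_le_mul_of_nonneg_left (hD y z0) (by positivity)
    have h0 : Metric.infDist x F0 ≤ 0 := ge_of_tendsto' htend key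
    exact (hF0c.isClosed.mem_iff_infDist_zero ⟨z0, hz0⟩).mpr
      (le_antisymm h0 Metric.infDist_nonneg)
  -- F0 ⊆ closure O
  have hOne : O.Nonempty := ⟨c0, hCO hc0⟩
  have hF0clO : F0 ⊆ closure O := by
    intro x hx
    have key : ∀ n : ℕ, Metric.infDist x O ≤ (K : ℝ) ^ (n + 1) * D := by
      intro n
      obtain ⟨w, y, hy, hlen, hxeq⟩ := hdecomp0 (n + 1) x hx
      have hw : w ≠ [] := by intro h; simp [h] at hlen
      have hmem : compList S w c0 ∈ O := hwO w hw ⟨c0, hc0, rfl⟩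
      calc Metric.infDist x O ≤ dist x (compList S w c0) :=
            Metric.infDist_le_dist_of_mem hmem
        _ = dist (compList S w y) (compList S w c0) := by rw [hxeq]
        _ ≤ (K : ℝ) ^ w.length * dist y c0 := hdist w y c0
        _ ≤ (K : ℝ) ^ (n + 1) * D := by
            rw [hlen]; exact mul_le_mul_of_nonneg_left (hD y c0) (by positivity)
    have htend' : Tendsto (fun n : ℕ => (K : ℝ) ^ (n + 1) * D) atTop (𝓝 0) :=
      htend.comp (tendsto_add_atTop_nat 1)
    have h0 : Metric.infDist x O ≤ 0 := ge_of_tendsto' htend' key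
    exact (Metric.mem_closure_iff_infDist_zero hOne).mpr
      (le_antisymm h0 Metric.infDist_nonneg)
  have hclOFC : closure O ⊆ FC := closure_minimal hOFC hFCc.isClosed
  have heq1 : FC = F0 ∪ O :=
    subset_antisymm hFCsub
      (union_subset ((hF0clO.trans hclOFC)) hOFC)
  refine ⟨heq1, subset_antisymm ?_ hclOFC⟩
  rw [heq1]
  exact union_subset hF0clO subset_closure
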